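/- For every measurable g : 𝒱 → ℝ (with all expectations below finite), E[((A − π(X))·λ'(π(X)) + λ(π(X)))·((Y¹−Y⁰) − g(V))²] = E[λ(π(X))·((Y¹−Y⁰) − g(V))²]; i.e., replacing the weight λ(π(X)) by (A − π(X))·λ'(π(X)) + λ(π(X)) does not change the weighted oracle risk. -/

import Mathlib

open MeasureTheory ProbabilityTheory

lemma stmt13_int_of_bdd {Ω : Type*} [MeasurableSpace Ω] {P : Measure Ω} [IsProbabilityMeasure P]
    {f : Ω → ℝ} (hf : Measurable f) (C : ℝ) (h : ∀ ω, |f ω| ≤ C) :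
    Integrable f P :=
  (integrable_const C).mono' hf.aestronglyMeasurable (Filter.Eventually.of_forall fun ω => by
    simpa [Real.norm_eq_abs] using h ω)

lemma stmt13_aux {Ω 𝓧 𝓤 : Type*} [m0 : MeasurableSpace Ω] [StandardBorelSpace Ω]
    [MeasurableSpace 𝓧] [MeasurableSpace 𝓤]
    (P : Measure Ω) [IsProbabilityMeasure P]
    (X : Ω → 𝓧) (hX : Measurable X) (U : Ω → 𝓤) (hU : Measurable U)
    (A : Ω → ℝ) (hA : Measurable A) (hA01 : ∀ ω, A ω = 0 ∨ A ω = 1)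
    (p : Ω → ℝ) (hp : @Measurable Ω ℝ (MeasurableSpace.comap X inferInstance) _ p)
    (hpbd : ∀ ω, |p ω| ≤ 1)
    (hpCE : p =ᵐ[P] P[A | MeasurableSpace.comap X inferInstance])
    (hCE : CondIndepFun (MeasurableSpace.comap X inferInstance) hX.comap_le U A P)
    (W : Ω → ℝ)
    (hW : @Measurable Ω ℝ
      (MeasurableSpace.comap X inferInstance ⊔ MeasurableSpace.comap U inferInstance) _ W)
    (hint : Integrable (fun ω => (A ω - p ω) * W ω) P) :
    ∫ ω, (A ω - p ω) * W ω ∂P = 0 := by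
  have hm : MeasurableSpace.comap X inferInstance ≤ m0 := hX.comap_le
  have hm2 : MeasurableSpace.comap U inferInstance ≤ m0 := hU.comap_le
  have hM : MeasurableSpace.comap X inferInstance ⊔ MeasurableSpace.comap U inferInstance
      ≤ m0 := sup_le hm hm2
  have intA : Integrable A P :=
    stmt13_int_of_bdd hA 1 (fun ω => by rcases hA01 ω with h|h <;> simp [h])
  have intp : Integrable p P := stmt13_int_of_bdd (hp.mono hm le_rfl) 1 hpbd
  have hAind : A = (A ⁻¹' {1}).indicator (fun _ => (1:ℝ)) := by
    funext ω; rcases hA01 ω with h|h <;> simp [Set.indicator, h]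
  have hCI := (condIndepFun_iff _ _ _ _ hU hA P).mp hCE
  -- the π-system generating the sup σ-algebra
  have hgen : (MeasurableSpace.comap X inferInstance ⊔ MeasurableSpace.comap U inferInstance)
      = MeasurableSpace.generateFrom
        {t : Set Ω | ∃ t1 t2, MeasurableSet[MeasurableSpace.comap X inferInstance] t1 ∧
          MeasurableSet[MeasurableSpace.comap U inferInstance] t2 ∧ t = t1 ∩ t2} := by
    refine le_antisymm (sup_le ?_ ?_) (MeasurableSpace.generateFrom_le ?_)
    · exact fun s hs => MeasurableSpace.measurableSet_generateFrom
        ⟨s, Set.univ, hs, MeasurableSet.univ, (Set.inter_univ s).symm⟩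
    · exact fun s hs => MeasurableSpace.measurableSet_generateFrom
        ⟨Set.univ, s, MeasurableSet.univ, hs, (Set.univ_inter s).symm⟩
    · rintro t ⟨t1, t2, h1, h2, rfl⟩
      exact (le_sup_left (b := MeasurableSpace.comap U inferInstance) _ h1).inter
        (le_sup_right (a := MeasurableSpace.comap X inferInstance) _ h2)
  have hpi : IsPiSystem {t : Set Ω |
      ∃ t1 t2, MeasurableSet[MeasurableSpace.comap X inferInstance] t1 ∧
        MeasurableSet[MeasurableSpace.comap U inferInstance] t2 ∧ t = t1 ∩ t2} := by
    rintro s ⟨s1, s2, hs1, hs2, rfl⟩ t ⟨t1, t2, ht1, ht2, rfl⟩ -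
    exact ⟨s1 ∩ t1, s2 ∩ t2, hs1.inter ht1, hs2.inter ht2, by
      rw [Set.inter_inter_inter_comm]⟩
  have htot : ∫ ω, p ω ∂P = ∫ ω, A ω ∂P := by
    rw [integral_congr_ae hpCE, integral_condExp hm]
  -- set-integral equality on rectangles
  have hbasic : ∀ t1 t2, MeasurableSet[MeasurableSpace.comap X inferInstance] t1 →
      MeasurableSet[MeasurableSpace.comap U inferInstance] t2 →
      ∫ x in t1 ∩ t2, p x ∂P = ∫ x in t1 ∩ t2, A x ∂P := by
    intro t1 t2 h1 h2
    have h1' : MeasurableSet t1 := hm _ h1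
    have h2' : MeasurableSet t2 := hm2 _ h2
    have i2 : Integrable (t2.indicator (fun _ => (1:ℝ))) P :=
      (integrable_const (1:ℝ)).indicator h2'
    have iAT : t2.indicator A = (t2 ∩ A ⁻¹' {1}).indicator (fun _ => (1:ℝ)) := by
      funext ω
      by_cases h : ω ∈ t2
      · rcases hA01 ω with h3|h3 <;> simp [Set.indicator, h, h3]
      · simp [Set.indicator, h]
    have ip2 : t2.indicator p = fun ω => p ω * t2.indicator (fun _ => (1:ℝ)) ω := by
      funext ω; by_cases h : ω ∈ t2 <;> simp [Set.indicator, h]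
    have ip2' : Integrable (fun ω => p ω * t2.indicator (fun _ => (1:ℝ)) ω) P := by
      refine stmt13_int_of_bdd ((hp.mono hm le_rfl).mul
        (measurable_const.indicator h2')) 1 (fun ω => ?_)
      by_cases h : ω ∈ t2 <;>
        simp [Set.indicator, h, abs_mul, hpbd ω]
    -- conditional prob of A-event is p
    have hTp : (P⟦A ⁻¹' {1} | MeasurableSpace.comap X inferInstance⟧) =ᵐ[P] p := by
      have : (P⟦A ⁻¹' {1} | MeasurableSpace.comap X inferInstance⟧)
          = P[A | MeasurableSpace.comap X inferInstance] := by rw [← hAind]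
      rw [this]; exact hpCE.symm
    have hAside : ∫ x in t1 ∩ t2, A x ∂P
        = ∫ x in t1, ((P⟦t2 | MeasurableSpace.comap X inferInstance⟧) x * p x) ∂P := by
      rw [← setIntegral_indicator h2', iAT,
        ← setIntegral_condExp hm ((integrable_const (1:ℝ)).indicator
          (h2'.inter (hA (measurableSet_singleton 1)))) h1]
      refine setIntegral_congr_ae h1' ?_
      filter_upwards [hCI t2 (A ⁻¹' {1}) h2 ⟨{1}, measurableSet_singleton 1, rfl⟩, hTp]
        with ω hω hω2 _
      rw [hω]; simp only [Pi.mul_apply]; rw [hω2]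
    have hpside : ∫ x in t1 ∩ t2, p x ∂P
        = ∫ x in t1, ((P⟦t2 | MeasurableSpace.comap X inferInstance⟧) x * p x) ∂P := by
      rw [← setIntegral_indicator h2', ip2, ← setIntegral_condExp hm ip2' h1]
      refine setIntegral_congr_ae h1' ?_
      have ip2'' : Integrable (p * t2.indicator (fun _ => (1:ℝ))) P := ip2'
      have hmul := condExp_mul_of_stronglyMeasurable_left (μ := P)
        (hp.stronglyMeasurable) ip2'' i2
      filter_upwards [hmul] with ω hω _
      exact hω.trans (by simp [mul_comm])
    rw [hpside, hAside]
  -- extend to all sets of the sup σ-algebra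
  have hsets : ∀ t, MeasurableSet[MeasurableSpace.comap X inferInstance
      ⊔ MeasurableSpace.comap U inferInstance] t →
      ∫ x in t, p x ∂P = ∫ x in t, A x ∂P := by
    refine MeasurableSpace.induction_on_inter
      (C := fun t _ => ∫ x in t, p x ∂P = ∫ x in t, A x ∂P)
      (m := MeasurableSpace.comap X inferInstance ⊔ MeasurableSpace.comap U inferInstance)
      hgen hpi (by simp) ?_ ?_ ?_
    · rintro t ⟨t1, t2, h1, h2, rfl⟩; exact hbasic t1 t2 h1 h2
    · intro t ht hC
      have h1 := integral_add_compl (hM _ ht) intp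
      have h2 := integral_add_compl (hM _ ht) intA
      linarith
    · intro f hd hf hC
      rw [integral_iUnion (fun i => hM _ (hf i)) hd intp.integrableOn,
        integral_iUnion (fun i => hM _ (hf i)) hd intA.integrableOn]
      exact tsum_congr hC
  have hkey : p =ᵐ[P] P[A | MeasurableSpace.comap X inferInstance
      ⊔ MeasurableSpace.comap U inferInstance] := by
    refine ae_eq_condExp_of_forall_setIntegral_eq hM intA
      (fun s _ _ => intp.integrableOn) (fun s hs _ => hsets s hs) ?_
    exact ((hp.mono (le_sup_left (a := MeasurableSpace.comap X inferInstance)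
      (b := MeasurableSpace.comap U inferInstance)) le_rfl).stronglyMeasurable).aestronglyMeasurable
  -- conclude
  have hWs : StronglyMeasurable[MeasurableSpace.comap X inferInstance
      ⊔ MeasurableSpace.comap U inferInstance] W := hW.stronglyMeasurable
  have intAp : Integrable (A - p) P := intA.sub intp
  have hint' : Integrable (W * (A - p)) P := by
    refine hint.congr (Filter.Eventually.of_forall fun ω => ?_)
    simp [mul_comm]
  have step : ∫ ω, (A ω - p ω) * W ω ∂P = ∫ ω, (W * (A - p)) ω ∂P := by
    refine integral_congr_ae (Filter.Eventually.of_forall fun ω => ?_)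
    simp [mul_comm]
  rw [step, ← integral_condExp hM (f := (W * (A - p)))]
  have hmul := condExp_mul_of_stronglyMeasurable_left (μ := P) hWs hint' intAp
  have hpc : P[p | MeasurableSpace.comap X inferInstance
      ⊔ MeasurableSpace.comap U inferInstance] = p :=
    condExp_of_stronglyMeasurable hM
      ((hp.mono (le_sup_left (a := MeasurableSpace.comap X inferInstance)
        (b := MeasurableSpace.comap U inferInstance)) le_rfl).stronglyMeasurable) intp
  have hzero : P[(A - p) | MeasurableSpace.comap X inferInstance
      ⊔ MeasurableSpace.comap U inferInstance] =ᵐ[P] 0 := by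
    have hsub := condExp_sub (m := MeasurableSpace.comap X inferInstance
      ⊔ MeasurableSpace.comap U inferInstance) (μ := P) intA intp
    filter_upwards [hsub, hkey] with ω h1 h2
    rw [h1, Pi.sub_apply, hpc, ← h2, Pi.zero_apply, sub_self]
  have hfin : P[(W * (A - p)) | MeasurableSpace.comap X inferInstance
      ⊔ MeasurableSpace.comap U inferInstance] =ᵐ[P] 0 := by
    filter_upwards [hmul, hzero] with ω h1 h2
    rw [h1, Pi.mul_apply, h2, Pi.zero_apply, mul_zero]
  rw [integral_congr_ae hfin]
  simp

/-- replacing the weight `λ(π(X))` by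
`(A − π(X))·λ'(π(X)) + λ(π(X))` does not change the weighted oracle risk. -/
theorem stmt13 {Ω 𝓧 𝓥 : Type*} [MeasurableSpace Ω] [StandardBorelSpace Ω]
    [MeasurableSpace 𝓧] [MeasurableSpace 𝓥]
    (P : Measure Ω) [IsProbabilityMeasure P]
    (X : Ω → 𝓧) (hX : Measurable X) (v : 𝓧 → 𝓥) (hv : Measurable v)
    (A Y0 Y1 : Ω → ℝ) (hA : Measurable A) (hY0 : Measurable Y0) (hY1 : Measurable Y1)
    (hA01 : ∀ ω, A ω = 0 ∨ A ω = 1)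
    (pr : 𝓧 → ℝ) (hprm : Measurable pr) (hpr : ∀ x, 0 < pr x ∧ pr x < 1)
    (hprCE : (fun ω => pr (X ω)) =ᵐ[P] P[A | MeasurableSpace.comap X inferInstance])
    (hCE : CondIndepFun (MeasurableSpace.comap X inferInstance) hX.comap_le
      (fun ω => (Y0 ω, Y1 ω)) A P)
    (lam lam' : ℝ → ℝ) (hlam : ∀ p, HasDerivAt lam (lam' p) p) (hlam' : Continuous lam')
    (g : 𝓥 → ℝ) (hg : Measurable g)
    (hI1 : Integrable (fun ω =>
      ((A ω - pr (X ω)) * lam' (pr (X ω)) + lam (pr (X ω)))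
        * ((Y1 ω - Y0 ω) - g (v (X ω))) ^ 2) P)
    (hI2 : Integrable (fun ω => lam (pr (X ω)) * ((Y1 ω - Y0 ω) - g (v (X ω))) ^ 2) P) :
    ∫ ω, ((A ω - pr (X ω)) * lam' (pr (X ω)) + lam (pr (X ω)))
        * ((Y1 ω - Y0 ω) - g (v (X ω))) ^ 2 ∂P
      = ∫ ω, lam (pr (X ω)) * ((Y1 ω - Y0 ω) - g (v (X ω))) ^ 2 ∂P := by
  have mXM : @Measurable Ω 𝓧 (MeasurableSpace.comap X inferInstance
      ⊔ MeasurableSpace.comap (fun ω => (Y0 ω, Y1 ω)) inferInstance) _ X :=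
    (Measurable.of_comap_le le_rfl).mono le_sup_left le_rfl
  have mUM : @Measurable Ω (ℝ × ℝ) (MeasurableSpace.comap X inferInstance
      ⊔ MeasurableSpace.comap (fun ω => (Y0 ω, Y1 ω)) inferInstance) _
      (fun ω => (Y0 ω, Y1 ω)) :=
    (Measurable.of_comap_le le_rfl).mono le_sup_right le_rfl
  have hW : @Measurable Ω ℝ (MeasurableSpace.comap X inferInstance
      ⊔ MeasurableSpace.comap (fun ω => (Y0 ω, Y1 ω)) inferInstance) _
      (fun ω => lam' (pr (X ω)) * ((Y1 ω - Y0 ω) - g (v (X ω))) ^ 2) := by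
    refine Measurable.mul ?_ ?_
    · exact (hlam'.measurable.comp hprm).comp mXM
    · exact (((measurable_snd.comp mUM).sub (measurable_fst.comp mUM)).sub
        (((hg.comp hv).comp mXM))).pow_const 2
  have hp : @Measurable Ω ℝ (MeasurableSpace.comap X inferInstance) _
      (fun ω => pr (X ω)) := hprm.comp (Measurable.of_comap_le le_rfl)
  have hpbd : ∀ ω, |pr (X ω)| ≤ 1 := fun ω => by
    have := hpr (X ω); rw [abs_le]; constructor <;> linarith [this.1, this.2]
  have hint : Integrable (fun ω => (A ω - pr (X ω))
      * (lam' (pr (X ω)) * ((Y1 ω - Y0 ω) - g (v (X ω))) ^ 2)) P := by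
    refine (hI1.sub hI2).congr (Filter.Eventually.of_forall fun ω => ?_)
    simp only [Pi.sub_apply]
    ring
  have key := stmt13_aux P X hX (fun ω => (Y0 ω, Y1 ω)) (hY0.prodMk hY1) A hA hA01
    (fun ω => pr (X ω)) hp hpbd hprCE hCE
    (fun ω => lam' (pr (X ω)) * ((Y1 ω - Y0 ω) - g (v (X ω))) ^ 2) hW hint
  calc ∫ ω, ((A ω - pr (X ω)) * lam' (pr (X ω)) + lam (pr (X ω)))
        * ((Y1 ω - Y0 ω) - g (v (X ω))) ^ 2 ∂P
      = ∫ ω, ((A ω - pr (X ω)) * (lam' (pr (X ω)) * ((Y1 ω - Y0 ω) - g (v (X ω))) ^ 2)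
          + lam (pr (X ω)) * ((Y1 ω - Y0 ω) - g (v (X ω))) ^ 2) ∂P :=
        integral_congr_ae (Filter.Eventually.of_forall fun ω => by ring)
    _ = (∫ ω, (A ω - pr (X ω)) * (lam' (pr (X ω)) * ((Y1 ω - Y0 ω) - g (v (X ω))) ^ 2) ∂P)
          + ∫ ω, lam (pr (X ω)) * ((Y1 ω - Y0 ω) - g (v (X ω))) ^ 2 ∂P :=
        integral_add hint hI2
    _ = ∫ ω, lam (pr (X ω)) * ((Y1 ω - Y0 ω) - g (v (X ω))) ^ 2 ∂P := by
        rw [key, zero_add]
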